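/- arXiv:2210.08348 — 3 statements merged into one kernel-verified Lean document; each statement's English description precedes it below -/
import Mathlib

section
/- For every g = (a_{ij}) ∈ SL(2,ℂ), every m ∈ ℤ, ρ ∈ ℝ, and every f ∈ L²(ℂ), the function T^{(m,ρ)}(g)f belongs to L²(ℂ) and has the same L² norm as f; consequently T^{(m,ρ)}(g) extends to a unitary operator on L²(ℂ). -/
open MeasureTheory Complex

noncomputable section

/-- The principal series operator `T^{(m,ρ)}(g)` of `SL(2,ℂ)` acting on functions on `ℂ`. -/
def principalSeriesC (m : ℤ) (ρ : ℝ) (g : Matrix.SpecialLinearGroup (Fin 2) ℂ)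
    (f : ℂ → ℂ) : ℂ → ℂ := fun z =>
  (‖g.1 0 1 * z + g.1 1 1‖ : ℂ) ^ ((-2 + (m : ℂ)) + Complex.I * (ρ : ℂ)) *
    (g.1 0 1 * z + g.1 1 1) ^ (-m) *
    f ((g.1 0 0 * z + g.1 1 0) / (g.1 0 1 * z + g.1 1 1))

open ENNReal

lemma det_mul_aux (w : ℂ) :
    LinearMap.det (((ContinuousLinearMap.smulRight (1 : ℂ →L[ℂ] ℂ) w).restrictScalars ℝ :
      ℂ →L[ℝ] ℂ) : ℂ →ₗ[ℝ] ℂ) = Complex.normSq w := by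
  rw [← LinearMap.det_toMatrix Complex.basisOneI, Matrix.det_fin_two]
  simp [LinearMap.toMatrix_apply, Complex.normSq_apply]

/-- Change of variables for a Möbius transformation coming from `SL(2,ℂ)`. -/
lemma lintegral_comp_mobius (g : Matrix.SpecialLinearGroup (Fin 2) ℂ) (h : ℂ → ℝ≥0∞) :
    ∫⁻ z, ENNReal.ofReal ((Complex.normSq (g.1 0 1 * z + g.1 1 1)) ^ 2)⁻¹ *
      h ((g.1 0 0 * z + g.1 1 0) / (g.1 0 1 * z + g.1 1 1)) = ∫⁻ w, h w := by
  set a := g.1 0 0; set c := g.1 0 1; set b := g.1 1 0; set d := g.1 1 1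
  have hdet : a * d - c * b = 1 := by
    have := g.2; rwa [Matrix.det_fin_two] at this
  set φ : ℂ → ℂ := fun z => (a * z + b) / (c * z + d) with hφ
  by_cases hc : c = 0
  · -- affine case
    have had : a * d = 1 := by linear_combination hdet + b * hc
    have hd : d ≠ 0 := fun h0 => by simp [h0] at had
    have ha : a ≠ 0 := fun h0 => by simp [h0] at had
    have hnsq : Complex.normSq (a / d) = ((Complex.normSq d) ^ 2)⁻¹ := by
      have h1 : Complex.normSq a * Complex.normSq d = 1 := by
        rw [← map_mul, had, map_one]
      rw [map_div₀, pow_two, mul_inv, div_eq_mul_inv]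
      congr 1
      exact eq_inv_of_mul_eq_one_left h1
    have hderiv : ∀ z ∈ (Set.univ : Set ℂ),
        HasFDerivWithinAt φ (((ContinuousLinearMap.smulRight (1 : ℂ →L[ℂ] ℂ)
          (a / d)).restrictScalars ℝ)) Set.univ z := by
      intro z _
      have : HasDerivAt φ (a / d) z := by
        have : HasDerivAt (fun z : ℂ => (a * z + b) / d) (a / d) z := by
          simpa [add_div, mul_div_assoc] using
            (((hasDerivAt_id z).const_mul a).add_const b).div_const d
        simpa [hφ, hc] using this
      exact (this.hasFDerivAt.restrictScalars ℝ).hasFDerivWithinAt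
    have hinj : Set.InjOn φ Set.univ := by
      intro z1 _ z2 _ hz
      simp only [hφ, hc, zero_mul, zero_add] at hz
      field_simp [hd] at hz
      simpa [ha] using hz
    have hsurj : φ '' Set.univ = Set.univ := by
      apply Set.eq_univ_of_forall
      intro w
      refine ⟨(d * w - b) / a, trivial, ?_⟩
      simp only [hφ, hc, zero_mul, zero_add]
      field_simp
      ring
    have key := lintegral_image_eq_lintegral_abs_det_fderiv_mul (volume : Measure ℂ)
      MeasurableSet.univ hderiv hinj h
    rw [hsurj] at key
    simp only [Measure.restrict_univ] at key
    rw [key]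
    apply lintegral_congr
    intro z
    congr 2
    · rw [ContinuousLinearMap.det, det_mul_aux,
        _root_.abs_of_nonneg (Complex.normSq_nonneg _), hnsq, hc]
      simp
  · -- genuine Möbius case
    set s : Set ℂ := {(-d/c)}ᶜ with hs_def
    have hms : MeasurableSet s := (measurableSet_singleton _).compl
    have hmem : ∀ z ∈ s, c * z + d ≠ 0 := by
      intro z hz h0
      apply hz
      show z = -d/c
      field_simp
      linear_combination h0
    have hderiv : ∀ z ∈ s, HasFDerivWithinAt φ
        (((ContinuousLinearMap.smulRight (1 : ℂ →L[ℂ] ℂ)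
          (((c * z + d) ^ 2)⁻¹)).restrictScalars ℝ)) s z := by
      intro z hz
      have h1 : HasDerivAt (fun z : ℂ => a * z + b) a z :=
        by simpa using ((hasDerivAt_id z).const_mul a).add_const b
      have h2 : HasDerivAt (fun z : ℂ => c * z + d) c z :=
        by simpa using ((hasDerivAt_id z).const_mul c).add_const d
      have h3 : HasDerivAt φ ((a * (c * z + d) - (a * z + b) * c) / (c * z + d) ^ 2) z :=
        h1.div h2 (hmem z hz)
      have h4 : (a * (c * z + d) - (a * z + b) * c) / (c * z + d) ^ 2 = ((c * z + d) ^ 2)⁻¹ := by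
        rw [inv_eq_one_div]
        congr 1
        linear_combination hdet
      rw [h4] at h3
      exact (h3.hasFDerivAt.restrictScalars ℝ).hasFDerivWithinAt
    have hinj : Set.InjOn φ s := by
      intro z1 h1 z2 h2 hz
      simp only [hφ] at hz
      rw [div_eq_div_iff (hmem z1 h1) (hmem z2 h2)] at hz
      have : (a * d - c * b) * z1 = (a * d - c * b) * z2 := by linear_combination hz
      rw [hdet] at this
      simpa using this
    have himg : φ '' s = {(a/c)}ᶜ := by
      ext w
      constructor
      · rintro ⟨z, hz, rfl⟩
        intro hw
        have hw' : (a * z + b) / (c * z + d) = a / c := hw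
        rw [div_eq_div_iff (hmem z hz) hc] at hw'
        apply (one_ne_zero : (1:ℂ) ≠ 0)
        rw [← hdet]
        linear_combination -hw'
      · intro hw
        have hacw : a - c * w ≠ 0 := by
          intro h0
          apply hw
          show w = a/c
          field_simp
          linear_combination -h0
        refine ⟨(d * w - b) / (a - c * w), ?_, ?_⟩
        · intro hzz
          have hzz' : (d * w - b) / (a - c * w) = -d/c := hzz
          rw [div_eq_div_iff hacw hc] at hzz'
          have : (a * d - c * b) = 0 := by linear_combination hzz'
          rw [hdet] at this
          exact one_ne_zero this
        · show (a * ((d * w - b) / (a - c * w)) + b) / (c * ((d * w - b) / (a - c * w)) + d) = w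
          have e3 : c * ((d * w - b) / (a - c * w)) + d = 1 / (a - c * w) := by
            field_simp
            linear_combination hdet
          have e4 : a * ((d * w - b) / (a - c * w)) + b = w / (a - c * w) := by
            rw [eq_div_iff hacw, add_mul, mul_assoc, div_mul_cancel₀ _ hacw]
            linear_combination w * hdet
          rw [e3, e4]
          rw [div_div_div_cancel_right₀ hacw, div_one]
    have key := lintegral_image_eq_lintegral_abs_det_fderiv_mul (volume : Measure ℂ)
      hms hderiv hinj h
    rw [himg] at key
    have e1 : (volume : Measure ℂ).restrict s = volume := by
      rw [Measure.restrict_congr_set (ae_eq_univ.mpr (by simp [hs_def])),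
        Measure.restrict_univ]
    have e2 : (volume : Measure ℂ).restrict {(a/c)}ᶜ = volume := by
      rw [Measure.restrict_congr_set (ae_eq_univ.mpr (by simp)), Measure.restrict_univ]
    rw [e1, e2] at key
    rw [key]
    apply lintegral_congr
    intro z
    congr 2
    rw [ContinuousLinearMap.det, det_mul_aux,
      _root_.abs_of_nonneg (Complex.normSq_nonneg _), map_inv₀, map_pow]


-- abbreviation lemmas
lemma mobius_measurable (g : Matrix.SpecialLinearGroup (Fin 2) ℂ) :
    Measurable (fun z : ℂ => (g.1 0 0 * z + g.1 1 0) / (g.1 0 1 * z + g.1 1 1)) := by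
  fun_prop

lemma denom_ne_zero_ae (g : Matrix.SpecialLinearGroup (Fin 2) ℂ) :
    ∀ᵐ z : ℂ ∂(volume : Measure ℂ), g.1 0 1 * z + g.1 1 1 ≠ 0 := by
  set a := g.1 0 0; set c := g.1 0 1; set b := g.1 1 0; set d := g.1 1 1
  have hdet : a * d - c * b = 1 := by
    have := g.2; rwa [Matrix.det_fin_two] at this
  by_cases hc : c = 0
  · have had : a * d = 1 := by linear_combination hdet + b * hc
    have hd : d ≠ 0 := fun h0 => by simp [h0] at had
    filter_upwards with z h0
    rw [hc] at h0
    simp at h0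
    exact hd h0
  · rw [ae_iff]
    refine measure_mono_null (fun z hz => ?_) (measure_singleton (-d/c))
    simp only [Set.mem_setOf_eq, not_not] at hz
    simp only [Set.mem_singleton_iff]
    field_simp
    linear_combination hz

lemma comp_mobius_ae_congr (g : Matrix.SpecialLinearGroup (Fin 2) ℂ) {f1 f2 : ℂ → ℂ}
    (h : f1 =ᵐ[(volume : Measure ℂ)] f2) :
    (fun z : ℂ => f1 ((g.1 0 0 * z + g.1 1 0) / (g.1 0 1 * z + g.1 1 1)))
      =ᵐ[(volume : Measure ℂ)]
    (fun z : ℂ => f2 ((g.1 0 0 * z + g.1 1 0) / (g.1 0 1 * z + g.1 1 1))) := by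
  set φ : ℂ → ℂ := fun z => (g.1 0 0 * z + g.1 1 0) / (g.1 0 1 * z + g.1 1 1) with hφ
  obtain ⟨N, hsub, hNm, hN0⟩ := exists_measurable_superset_of_null (h : volume {x | f1 x ≠ f2 x} = 0)
  have key := lintegral_comp_mobius g (N.indicator 1)
  simp only [lintegral_indicator hNm, Pi.one_apply, setLIntegral_one, hN0] at key
  have hmeas : Measurable (fun z : ℂ =>
      ENNReal.ofReal ((Complex.normSq (g.1 0 1 * z + g.1 1 1)) ^ 2)⁻¹ *
        N.indicator 1 (φ z)) := by
    apply Measurable.mul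
    · apply Measurable.ennreal_ofReal
      apply Measurable.inv
      apply Measurable.pow_const
      exact Complex.continuous_normSq.measurable.comp (by fun_prop)
    · exact (measurable_one.indicator hNm).comp (mobius_measurable g)
  rw [lintegral_eq_zero_iff hmeas] at key
  filter_upwards [key, denom_ne_zero_ae g] with z hz hd
  simp only [Pi.zero_apply, mul_eq_zero] at hz
  rcases hz with hz | hz
  · exfalso
    rw [ENNReal.ofReal_eq_zero] at hz
    have : (0:ℝ) < ((Complex.normSq (g.1 0 1 * z + g.1 1 1)) ^ 2)⁻¹ :=
      inv_pos.mpr (pow_pos (Complex.normSq_pos.mpr hd) 2)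
    linarith
  · have : φ z ∉ N := by
      intro hmem
      rw [Set.indicator_of_mem hmem] at hz
      simp at hz
    have : φ z ∉ {x | f1 x ≠ f2 x} := fun hc => this (hsub hc)
    simpa using of_not_not (by simpa using this)



lemma ps_congr (m : ℤ) (ρ : ℝ) (g : Matrix.SpecialLinearGroup (Fin 2) ℂ) {f1 f2 : ℂ → ℂ}
    (h : f1 =ᵐ[(volume : Measure ℂ)] f2) :
    principalSeriesC m ρ g f1 =ᵐ[(volume : Measure ℂ)] principalSeriesC m ρ g f2 := by
  filter_upwards [comp_mobius_ae_congr g h] with z hz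
  simp only [principalSeriesC, hz]

lemma norm_ps (m : ℤ) (ρ : ℝ) (g : Matrix.SpecialLinearGroup (Fin 2) ℂ) (f : ℂ → ℂ) (z : ℂ)
    (hz : g.1 0 1 * z + g.1 1 1 ≠ 0) :
    ‖principalSeriesC m ρ g f z‖ = (Complex.normSq (g.1 0 1 * z + g.1 1 1))⁻¹ *
      ‖f ((g.1 0 0 * z + g.1 1 0) / (g.1 0 1 * z + g.1 1 1))‖ := by
  set L : ℂ := g.1 0 1 * z + g.1 1 1 with hL
  have habs : (0:ℝ) < ‖L‖ := norm_pos_iff.mpr hz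
  rw [principalSeriesC, norm_mul, norm_mul]
  congr 1
  have h1 : ‖(‖L‖ : ℂ) ^ ((-2 + (m : ℂ)) + Complex.I * (ρ : ℂ))‖
      = (‖L‖) ^ ((-2 + (m:ℝ))) := by
    rw [Complex.norm_cpow_eq_rpow_re_of_pos habs]
    norm_num
  have h2 : ‖L ^ (-m)‖ = (‖L‖) ^ (((-m : ℤ) : ℝ)) := by
    rw [norm_zpow, Real.rpow_intCast]
  rw [h1, h2, ← Real.rpow_add habs]
  have : (-2 + (m:ℝ)) + ((-m : ℤ) : ℝ) = -2 := by push_cast; ring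
  rw [this]
  rw [show (-2 : ℝ) = -(2:ℝ) from rfl, Real.rpow_neg habs.le]
  congr 1
  rw [show (2:ℝ) = ((2:ℕ):ℝ) by norm_num, Real.rpow_natCast, Complex.sq_norm]

lemma lint_sq (m : ℤ) (ρ : ℝ) (g : Matrix.SpecialLinearGroup (Fin 2) ℂ) (f : ℂ → ℂ) :
    ∫⁻ z, (‖principalSeriesC m ρ g f z‖₊ : ℝ≥0∞) ^ (2:ℝ)
      = ∫⁻ z, (‖f z‖₊ : ℝ≥0∞) ^ (2:ℝ) := by
  have step : ∀ᵐ z : ℂ ∂(volume : Measure ℂ),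
      (‖principalSeriesC m ρ g f z‖₊ : ℝ≥0∞) ^ (2:ℝ)
        = ENNReal.ofReal ((Complex.normSq (g.1 0 1 * z + g.1 1 1)) ^ 2)⁻¹ *
          (‖f ((g.1 0 0 * z + g.1 1 0) / (g.1 0 1 * z + g.1 1 1))‖₊ : ℝ≥0∞) ^ (2:ℝ) := by
    filter_upwards [denom_ne_zero_ae g] with z hz
    rw [show ∀ x : ℂ, (‖x‖₊ : ℝ≥0∞) = ENNReal.ofReal ‖x‖ from fun x => (ofReal_norm x).symm,
      show ∀ x : ℂ, (‖x‖₊ : ℝ≥0∞) = ENNReal.ofReal ‖x‖ from fun x => (ofReal_norm x).symm, norm_ps m ρ g f z hz,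
      ENNReal.ofReal_mul (inv_nonneg.mpr (Complex.normSq_nonneg _)),
      ENNReal.mul_rpow_of_nonneg _ _ (by norm_num : (0:ℝ) ≤ 2)]
    congr 1
    rw [ENNReal.ofReal_rpow_of_nonneg (inv_nonneg.mpr (Complex.normSq_nonneg _))
      (by norm_num : (0:ℝ) ≤ 2)]
    rw [show (2:ℝ) = ((2:ℕ):ℝ) by norm_num, Real.rpow_natCast, inv_pow]
  rw [lintegral_congr_ae step,
    lintegral_comp_mobius g (fun w => (‖f w‖₊ : ℝ≥0∞) ^ (2:ℝ))]

lemma ps_main (m : ℤ) (ρ : ℝ) (g : Matrix.SpecialLinearGroup (Fin 2) ℂ) {f : ℂ → ℂ}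
    (hf : MemLp f 2 (volume : Measure ℂ)) :
    MemLp (principalSeriesC m ρ g f) 2 (volume : Measure ℂ) ∧
      eLpNorm (principalSeriesC m ρ g f) 2 (volume : Measure ℂ)
        = eLpNorm f 2 (volume : Measure ℂ) := by
  have hsm : AEStronglyMeasurable (principalSeriesC m ρ g f) (volume : Measure ℂ) := by
    set f' : ℂ → ℂ := hf.1.mk f with hf'def
    have hs : StronglyMeasurable f' := hf.1.stronglyMeasurable_mk
    have hae : f =ᵐ[(volume : Measure ℂ)] f' := hf.1.ae_eq_mk
    set U : Set ℂ := {z : ℂ | g.1 0 1 * z + g.1 1 1 ≠ 0} with hU_def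
    have hLcont : Continuous (fun z : ℂ => g.1 0 1 * z + g.1 1 1) := by fun_prop
    have hUopen : IsOpen U := (isOpen_compl_singleton).preimage hLcont
    have hUm : MeasurableSet U := hUopen.measurableSet
    have hres : (volume : Measure ℂ).restrict U = volume := by
      rw [Measure.restrict_congr_set (ae_eq_univ.mpr ?_), Measure.restrict_univ]
      have := denom_ne_zero_ae g
      rw [ae_iff] at this
      exact this
    have hP : ContinuousOn (fun z : ℂ =>
        (‖g.1 0 1 * z + g.1 1 1‖ : ℂ) ^ ((-2 + (m : ℂ)) + Complex.I * (ρ : ℂ)) *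
          (g.1 0 1 * z + g.1 1 1) ^ (-m)) U := by
      intro z hz
      apply ContinuousAt.continuousWithinAt
      apply ContinuousAt.mul
      · have h1 : ContinuousAt (fun x : ℂ => x ^ ((-2 + (m : ℂ)) + Complex.I * (ρ : ℂ)))
            ((‖g.1 0 1 * z + g.1 1 1‖ : ℂ)) := by
          apply continuousAt_cpow_const
          apply Complex.mem_slitPlane_iff.mpr
          left
          simp only [Complex.ofReal_re]
          exact norm_pos_iff.mpr hz
        exact ContinuousAt.comp (g := fun x : ℂ => x ^ ((-2 + (m : ℂ)) + Complex.I * (ρ : ℂ))) h1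
          (Complex.continuous_ofReal.comp (continuous_norm.comp hLcont)).continuousAt
      · exact ContinuousAt.comp (g := fun x : ℂ => x ^ (-m))
          (continuousAt_zpow₀ _ _ (Or.inl hz)) hLcont.continuousAt
    have hPaesm : AEStronglyMeasurable (fun z : ℂ =>
        (‖g.1 0 1 * z + g.1 1 1‖ : ℂ) ^ ((-2 + (m : ℂ)) + Complex.I * (ρ : ℂ)) *
          (g.1 0 1 * z + g.1 1 1) ^ (-m)) (volume : Measure ℂ) := by
      rw [← hres]
      exact hP.aestronglyMeasurable hUm
    have hcomp : StronglyMeasurable (fun z : ℂ =>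
        f' ((g.1 0 0 * z + g.1 1 0) / (g.1 0 1 * z + g.1 1 1))) :=
      hs.comp_measurable (mobius_measurable g)
    have hTf' : AEStronglyMeasurable (principalSeriesC m ρ g f') (volume : Measure ℂ) :=
      hPaesm.mul hcomp.aestronglyMeasurable
    exact (aestronglyMeasurable_congr (ps_congr m ρ g hae)).mpr hTf'
  have hnorm : eLpNorm (principalSeriesC m ρ g f) 2 (volume : Measure ℂ)
      = eLpNorm f 2 (volume : Measure ℂ) := by
    rw [eLpNorm_eq_lintegral_rpow_enorm_toReal (two_ne_zero) ENNReal.ofNat_ne_top,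
      eLpNorm_eq_lintegral_rpow_enorm_toReal (two_ne_zero) ENNReal.ofNat_ne_top]
    congr 1
    simp only [ENNReal.toReal_ofNat]
    exact lint_sq m ρ g f
  exact ⟨⟨hsm, hnorm ▸ hf.2⟩, hnorm⟩


lemma ps_inv_comp (m : ℤ) (ρ : ℝ) (g : Matrix.SpecialLinearGroup (Fin 2) ℂ) (f : ℂ → ℂ) :
    principalSeriesC m ρ g (principalSeriesC m ρ g⁻¹ f) =ᵐ[(volume : Measure ℂ)] f := by
  have hinv := Matrix.SpecialLinearGroup.SL2_inv_expl g
  have e00 : (g⁻¹).1 0 0 = g.1 1 1 := by rw [hinv]; rfl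
  have e01 : (g⁻¹).1 0 1 = -g.1 0 1 := by rw [hinv]; rfl
  have e10 : (g⁻¹).1 1 0 = -g.1 1 0 := by rw [hinv]; rfl
  have e11 : (g⁻¹).1 1 1 = g.1 0 0 := by rw [hinv]; rfl
  set a := g.1 0 0; set c := g.1 0 1; set b := g.1 1 0; set d := g.1 1 1
  have hdet : a * d - c * b = 1 := by
    have := g.2; rwa [Matrix.det_fin_two] at this
  filter_upwards [denom_ne_zero_ae g] with z hz
  set L : ℂ := c * z + d with hLdef
  set w : ℂ := (a * z + b) / L with hwdef
  have hw : (g⁻¹).1 0 1 * w + (g⁻¹).1 1 1 = L⁻¹ := by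
    rw [e01, e11, hwdef]
    field_simp
    linear_combination hdet
  have hψ : ((g⁻¹).1 0 0 * w + (g⁻¹).1 1 0) / ((g⁻¹).1 0 1 * w + (g⁻¹).1 1 1) = z := by
    rw [hw, e00, e10, hwdef]
    have h1 : d * ((a * z + b) / L) + -b = z / L := by
      field_simp
      linear_combination z * hdet
    rw [h1, div_div, mul_inv_cancel₀ hz, div_one]
  show (‖L‖ : ℂ) ^ ((-2 + (m : ℂ)) + Complex.I * (ρ : ℂ)) * L ^ (-m) *
      ((‖(g⁻¹).1 0 1 * w + (g⁻¹).1 1 1‖ : ℂ) ^ ((-2 + (m : ℂ)) + Complex.I * (ρ : ℂ)) *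
        ((g⁻¹).1 0 1 * w + (g⁻¹).1 1 1) ^ (-m) *
        f (((g⁻¹).1 0 0 * w + (g⁻¹).1 1 0) / ((g⁻¹).1 0 1 * w + (g⁻¹).1 1 1))) = f z
  rw [hψ, hw, norm_inv]
  have habs : ‖L‖ ≠ 0 := by
    simpa using hz
  rw [show ∀ A B A' B' F : ℂ, A * B * (A' * B' * F) = (A * A') * (B * B') * F from
    fun _ _ _ _ _ => by ring]
  rw [← mul_cpow_ofReal_nonneg (norm_nonneg _)
    (inv_nonneg.mpr (norm_nonneg _)),
    ← Complex.ofReal_mul, mul_inv_cancel₀ habs, ← mul_zpow, mul_inv_cancel₀ hz]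
  simp


/-- The principal series operator as a linear map on `L²(ℂ)`. -/
def psL (m : ℤ) (ρ : ℝ) (g : Matrix.SpecialLinearGroup (Fin 2) ℂ) :
    Lp ℂ 2 (volume : Measure ℂ) →ₗ[ℂ] Lp ℂ 2 (volume : Measure ℂ) where
  toFun F := MemLp.toLp _ (ps_main m ρ g (Lp.memLp F)).1
  map_add' F G := by
    rw [← MemLp.toLp_add]
    apply MemLp.toLp_congr
    refine (ps_congr m ρ g (Lp.coeFn_add F G)).trans (Filter.EventuallyEq.of_eq ?_)
    funext z
    simp only [principalSeriesC, Pi.add_apply]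
    ring
  map_smul' k F := by
    simp only [RingHom.id_apply]
    rw [← MemLp.toLp_const_smul]
    apply MemLp.toLp_congr
    refine (ps_congr m ρ g (Lp.coeFn_smul k F)).trans (Filter.EventuallyEq.of_eq ?_)
    funext z
    simp only [principalSeriesC, Pi.smul_apply, smul_eq_mul]
    ring

lemma psL_inv_comp (m : ℤ) (ρ : ℝ) (g : Matrix.SpecialLinearGroup (Fin 2) ℂ)
    (F : Lp ℂ 2 (volume : Measure ℂ)) : psL m ρ g (psL m ρ g⁻¹ F) = F := by
  have hae : principalSeriesC m ρ g
      ((MemLp.toLp _ (ps_main m ρ g⁻¹ (Lp.memLp F)).1 : Lp ℂ 2 (volume : Measure ℂ)) : ℂ → ℂ)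
      =ᵐ[(volume : Measure ℂ)] (F : ℂ → ℂ) :=
    (ps_congr m ρ g (MemLp.coeFn_toLp (ps_main m ρ g⁻¹ (Lp.memLp F)).1)).trans
      (ps_inv_comp m ρ g _)
  show MemLp.toLp _ (ps_main m ρ g (Lp.memLp (psL m ρ g⁻¹ F))).1 = F
  exact Lp.ext ((MemLp.coeFn_toLp _).trans hae)

/-- For every `g ∈ SL(2,ℂ)`, `m ∈ ℤ`, `ρ ∈ ℝ` and `f ∈ L²(ℂ)`, the function `T^{(m,ρ)}(g) f`
belongs to `L²(ℂ)` with the same norm; consequently `T^{(m,ρ)}(g)` extends to a unitary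
operator on `L²(ℂ)`. -/
theorem principalSeriesC_unitary (g : Matrix.SpecialLinearGroup (Fin 2) ℂ) (m : ℤ) (ρ : ℝ) :
    (∀ f : ℂ → ℂ, MemLp f 2 (volume : Measure ℂ) →
      MemLp (principalSeriesC m ρ g f) 2 (volume : Measure ℂ) ∧
      eLpNorm (principalSeriesC m ρ g f) 2 (volume : Measure ℂ)
        = eLpNorm f 2 (volume : Measure ℂ)) ∧
    ∃ U : Lp ℂ 2 (volume : Measure ℂ) ≃ₗᵢ[ℂ] Lp ℂ 2 (volume : Measure ℂ),
      ∀ F : Lp ℂ 2 (volume : Measure ℂ),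
        (U F : ℂ → ℂ) =ᵐ[(volume : Measure ℂ)] principalSeriesC m ρ g (F : ℂ → ℂ) := by
  constructor
  · exact fun f hf => ps_main m ρ g hf
  · have h1 : ∀ F, psL m ρ g (psL m ρ g⁻¹ F) = F := psL_inv_comp m ρ g
    have h2 : ∀ F, psL m ρ g⁻¹ (psL m ρ g F) = F := by
      intro F
      have := psL_inv_comp m ρ g⁻¹ F
      rwa [inv_inv] at this
    refine ⟨⟨LinearEquiv.ofLinear (psL m ρ g) (psL m ρ g⁻¹)
        (LinearMap.ext h1) (LinearMap.ext h2), ?_⟩, ?_⟩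
    · intro F
      show ‖MemLp.toLp _ (ps_main m ρ g (Lp.memLp F)).1‖ = ‖F‖
      rw [Lp.norm_toLp, (ps_main m ρ g (Lp.memLp F)).2, ← Lp.norm_def]
    · intro F
      exact MemLp.coeFn_toLp (ps_main m ρ g (Lp.memLp F)).1
end
end

section
/- For all g₁, g₂ ∈ SL(2,ℂ), all m ∈ ℤ, ρ ∈ ℝ, and every f ∈ L²(ℂ), one has T^{(m,ρ)}(g₁)(T^{(m,ρ)}(g₂)f) = T^{(m,ρ)}(g₁·g₂)f as elements of L²(ℂ) (i.e., the two functions agree Lebesgue-almost everywhere on ℂ); thus g ↦ T^{(m,ρ)}(g) is a group homomorphism into the unitary group of L²(ℂ). -/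
open MeasureTheory Complex

noncomputable section

private lemma ps_zero (m : ℤ) (ρ : ℝ) {c : ℂ} (hc : c = 0) :
    (‖c‖ : ℂ) ^ ((-2 + (m : ℂ)) + Complex.I * (ρ : ℂ)) * c ^ (-m) = 0 := by
  subst hc
  by_cases hm : m = 0
  · subst hm
    rw [neg_zero, zpow_zero, mul_one, norm_zero, Complex.ofReal_zero, Complex.zero_cpow]
    intro h
    have := congrArg Complex.re h
    simp at this
  · rw [zero_zpow _ (neg_ne_zero.mpr hm), mul_zero]

private lemma line_null {a b : ℂ} (h : a ≠ 0 ∨ b ≠ 0) :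
    (volume : Measure ℂ) {z : ℂ | a * z + b = 0} = 0 := by
  rcases eq_or_ne a 0 with ha | ha
  · subst ha
    have hb : b ≠ 0 := h.resolve_left (by simp)
    have : {z : ℂ | 0 * z + b = 0} = (∅ : Set ℂ) := by
      ext z; simp [hb]
    rw [this, measure_empty]
  · have : {z : ℂ | a * z + b = 0} = {-b / a} := by
      ext z
      simp only [Set.mem_setOf_eq, Set.mem_singleton_iff]
      constructor
      · intro hz
        field_simp
        linear_combination hz
      · intro hz
        subst hz
        field_simp
        ring
    rw [this]
    exact measure_singleton _

private lemma sl2_pair (g : Matrix.SpecialLinearGroup (Fin 2) ℂ) :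
    g.1 0 1 ≠ 0 ∨ g.1 1 1 ≠ 0 := by
  by_contra h
  push_neg at h
  have hd : g.1.det = 1 := g.2
  rw [Matrix.det_fin_two, h.1, h.2] at hd
  simp at hd

/-- For all `g₁, g₂ ∈ SL(2,ℂ)` and every `f ∈ L²(ℂ)`,
`T^{(m,ρ)}(g₁)(T^{(m,ρ)}(g₂)f) = T^{(m,ρ)}(g₁·g₂)f` Lebesgue-almost everywhere on `ℂ`;
thus `g ↦ T^{(m,ρ)}(g)` is a group homomorphism into the unitary group of `L²(ℂ)`. -/
theorem principalSeriesC_mul (g₁ g₂ : Matrix.SpecialLinearGroup (Fin 2) ℂ) (m : ℤ) (ρ : ℝ)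
    (f : ℂ → ℂ) (hf : MemLp f 2 (volume : Measure ℂ)) :
    principalSeriesC m ρ g₁ (principalSeriesC m ρ g₂ f)
      =ᵐ[(volume : Measure ℂ)] principalSeriesC m ρ (g₁ * g₂) f := by
  have h1 : (volume : Measure ℂ) {z : ℂ | g₁.1 0 1 * z + g₁.1 1 1 = 0} = 0 :=
    line_null (sl2_pair g₁)
  filter_upwards [compl_mem_ae_iff.mpr h1] with z hz
  simp only [Set.mem_compl_iff, Set.mem_setOf_eq] at hz
  simp only [principalSeriesC]
  set c₁ : ℂ := g₁.1 0 1 * z + g₁.1 1 1 with hc₁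
  set w : ℂ := (g₁.1 0 0 * z + g₁.1 1 0) / c₁ with hw
  set c₂ : ℂ := g₂.1 0 1 * w + g₂.1 1 1 with hc₂
  have hP01 : (g₁ * g₂).1 0 1 = g₁.1 0 0 * g₂.1 0 1 + g₁.1 0 1 * g₂.1 1 1 := by
    simp [Matrix.SpecialLinearGroup.coe_mul, Matrix.mul_apply, Fin.sum_univ_two]
  have hP11 : (g₁ * g₂).1 1 1 = g₁.1 1 0 * g₂.1 0 1 + g₁.1 1 1 * g₂.1 1 1 := by
    simp [Matrix.SpecialLinearGroup.coe_mul, Matrix.mul_apply, Fin.sum_univ_two]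
  have hP00 : (g₁ * g₂).1 0 0 = g₁.1 0 0 * g₂.1 0 0 + g₁.1 0 1 * g₂.1 1 0 := by
    simp [Matrix.SpecialLinearGroup.coe_mul, Matrix.mul_apply, Fin.sum_univ_two]
  have hP10 : (g₁ * g₂).1 1 0 = g₁.1 1 0 * g₂.1 0 0 + g₁.1 1 1 * g₂.1 1 0 := by
    simp [Matrix.SpecialLinearGroup.coe_mul, Matrix.mul_apply, Fin.sum_univ_two]
  have h12 : (g₁ * g₂).1 0 1 * z + (g₁ * g₂).1 1 1 = c₁ * c₂ := by
    rw [hP01, hP11, hc₂, hw]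
    field_simp [hc₁]
    ring
  have hnum : (g₁ * g₂).1 0 0 * z + (g₁ * g₂).1 1 0 = c₁ * (g₂.1 0 0 * w + g₂.1 1 0) := by
    rw [hP00, hP10, hw]
    field_simp [hc₁]
    ring
  rw [h12, hnum]
  by_cases hc2 : c₂ = 0
  · rw [ps_zero m ρ hc2, zero_mul, mul_zero,
      ps_zero m ρ (show c₁ * c₂ = 0 by rw [hc2, mul_zero]), zero_mul]
  · rw [mul_div_mul_left _ _ hz, norm_mul, Complex.ofReal_mul,
      Complex.mul_cpow_ofReal_nonneg (norm_nonneg _) (norm_nonneg _),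
      mul_zpow]
    ring
end
end

section
/- Let g = (g_{ij}) ∈ SL(3,ℂ) and let z be the lower unipotent matrix with subdiagonal entries z_{21}, z_{31}, z_{32} ∈ ℂ. Set D₁ := det(g_{22},g_{23};g_{32},g_{33}) + det(g_{12},g_{13};g_{32},g_{33})·z_{21} + det(g_{12},g_{13};g_{22},g_{23})·(z_{21}z_{32} − z_{31}) and D₂ := g_{33} + g_{23}z_{32} + g_{13}z_{31}, and assume D₁ ≠ 0 and D₂ ≠ 0. Then there exist k_{12}, k_{13}, k_{23} ∈ ℂ such that z·g = k·z', where k is the upper triangular matrix with diagonal entries k_{11} = 1/D₁, k_{22} = D₁/D₂, k_{33} = D₂ and upper entries k_{12}, k_{13}, k_{23}, and z' is the lower unipotent matrix with entries z'_{21} = [det(g_{21},g_{23};g_{31},g_{33}) + det(g_{11},g_{13};g_{31},g_{33})·z_{21} + det(g_{11},g_{13};g_{21},g_{23})·(z_{21}z_{32} − z_{31})]/D₁, z'_{31} = (g_{31} + g_{21}z_{32} + g_{11}z_{31})/D₂, z'_{32} = (g_{32} + g_{22}z_{32} + g_{12}z_{31})/D₂. -/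
open Matrix

noncomputable section

set_option maxHeartbeats 1000000

/-- `det2 a b c d = a*d - b*c`, the determinant of the 2×2 matrix `(a,b;c,d)`. -/
def det2 (a b c d : ℂ) : ℂ := a * d - b * c

/-- The Gauss decomposition `z·g = k_g·(zḡ)` for `SL(3,ℂ)`: given `g ∈ SL(3,ℂ)` and a
lower unipotent `z` with entries `z₂₁, z₃₁, z₃₂`, if `D₁ ≠ 0` and `D₂ ≠ 0` then there are
`k₁₂, k₁₃, k₂₃ ∈ ℂ` such that `z·g = k·z'` with `k` upper triangular with diagonal
`(1/D₁, D₁/D₂, D₂)` and `z'` lower unipotent with the stated entries. -/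
theorem gauss_decomposition_SL3C (g : Matrix.SpecialLinearGroup (Fin 3) ℂ)
    (z₂₁ z₃₁ z₃₂ : ℂ)
    (D₁ : ℂ)
    (hD₁def : D₁ = det2 (g.1 1 1) (g.1 1 2) (g.1 2 1) (g.1 2 2)
      + det2 (g.1 0 1) (g.1 0 2) (g.1 2 1) (g.1 2 2) * z₂₁
      + det2 (g.1 0 1) (g.1 0 2) (g.1 1 1) (g.1 1 2) * (z₂₁ * z₃₂ - z₃₁))
    (D₂ : ℂ)
    (hD₂def : D₂ = g.1 2 2 + g.1 1 2 * z₃₂ + g.1 0 2 * z₃₁)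
    (hD₁ : D₁ ≠ 0) (hD₂ : D₂ ≠ 0) :
    ∃ k₁₂ k₁₃ k₂₃ : ℂ,
      !![1, 0, 0; z₂₁, 1, 0; z₃₁, z₃₂, 1] * g.1
        = !![D₁⁻¹, k₁₂, k₁₃; 0, D₁ / D₂, k₂₃; 0, 0, D₂]
          * !![(1 : ℂ), 0, 0;
               (det2 (g.1 1 0) (g.1 1 2) (g.1 2 0) (g.1 2 2)
                 + det2 (g.1 0 0) (g.1 0 2) (g.1 2 0) (g.1 2 2) * z₂₁
                 + det2 (g.1 0 0) (g.1 0 2) (g.1 1 0) (g.1 1 2) * (z₂₁ * z₃₂ - z₃₁)) / D₁,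
               1, 0;
               (g.1 2 0 + g.1 1 0 * z₃₂ + g.1 0 0 * z₃₁) / D₂,
               (g.1 2 1 + g.1 1 1 * z₃₂ + g.1 0 1 * z₃₁) / D₂, 1] := by
  have hdet : g.1.det = 1 := g.2
  rw [Matrix.det_fin_three] at hdet
  refine ⟨g.1 0 1 - g.1 0 2 * ((g.1 2 1 + g.1 1 1 * z₃₂ + g.1 0 1 * z₃₁) / D₂),
    g.1 0 2, g.1 1 2 + z₂₁ * g.1 0 2, ?_⟩
  set a := g.1 0 0 with ha
  set b := g.1 0 1 with hb
  set c := g.1 0 2 with hc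
  set d := g.1 1 0 with hd
  set e := g.1 1 1 with he
  set f := g.1 1 2 with hf
  set p := g.1 2 0 with hp
  set q := g.1 2 1 with hq
  set r := g.1 2 2 with hr
  have hg : g.1 = !![a, b, c; d, e, f; p, q, r] := by
    rw [ha, hb, hc, hd, he, hf, hp, hq, hr]
    exact Matrix.etaExpand_eq g.1 ▸ rfl
  rw [hg]
  ext i j
  fin_cases i <;> fin_cases j <;>
    simp only [Matrix.mul_apply, Fin.sum_univ_three, det2, Matrix.cons_val',
      Matrix.cons_val_zero, Matrix.cons_val_one, Matrix.head_cons, Matrix.empty_val',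
      Matrix.cons_val_fin_one, Matrix.head_fin_const, Matrix.cons_val_two, Matrix.tail_cons,
      Fin.isValue, Matrix.of_apply, Fin.reduceFinMk] <;>
    field_simp <;>
    subst hD₁def hD₂def <;> simp only [det2] at * <;>
    first
      | ring1
      | linear_combination (r + f * z₃₂ + c * z₃₁) * hdet
      | linear_combination (-(r + f * z₃₂ + c * z₃₁)) * hdet
      | linear_combination ((r + f * z₃₂ + c * z₃₁) * (r + f * z₃₂ + c * z₃₁)) * hdet
end
end
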